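/- Let h be an irrational real number. The map ℤ² → ℝ² given by (m,n) ↦ f_{m·h+n, n}(0,0) = ((m·h+n)²/2 + n, m·h+n) is injective, and its image (the orbit of the origin under the group generated by f_{h,0} and f_{1,1}) is a closed, discrete subset of ℝ². -/

import Mathlib

/-- The affine map `f_{s,t}(x,y) = (x + s·y + s²/2 + t, y + s)` on `ℝ²`. -/
noncomputable def f (s t : ℝ) : ℝ × ℝ → ℝ × ℝ :=
  fun p => (p.1 + s * p.2 + s ^ 2 / 2 + t, p.2 + s)

/-- The orbit map of the origin under the group `{f_{m·h+n,n}}` generated by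
`f_{h,0}` and `f_{1,1}`. -/
noncomputable def orbitMap (h : ℝ) : ℤ × ℤ → ℝ × ℝ :=
  fun mn => f ((mn.1 : ℝ) * h + mn.2) (mn.2 : ℝ) (0, 0)

lemma intBall_finite (c : ℝ) : {x : ℤ | |(x : ℝ)| ≤ c}.Finite := by
  apply Set.Finite.subset (Set.finite_Icc (-⌈c⌉) ⌈c⌉)
  intro x hx
  rw [Set.mem_setOf_eq, abs_le] at hx
  constructor
  · have : ((-⌈c⌉ : ℤ) : ℝ) ≤ (x : ℝ) := by
      push_cast
      linarith [Int.le_ceil c]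
    exact_mod_cast this
  · exact Int.cast_le.mp (hx.2.trans (Int.le_ceil c))

theorem stmt6 (h : ℝ) (hh : Irrational h) :
    (∀ m n : ℤ,
      orbitMap h (m, n) = (((m : ℝ) * h + n) ^ 2 / 2 + n, (m : ℝ) * h + n)) ∧
    Function.Injective (orbitMap h) ∧
    IsClosed (Set.range (orbitMap h)) ∧
    DiscreteTopology (Set.range (orbitMap h)) := by
  have hne : h ≠ 0 := hh.ne_zero
  have hform : ∀ m n : ℤ,
      orbitMap h (m, n) = (((m : ℝ) * h + n) ^ 2 / 2 + n, (m : ℝ) * h + n) := by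
    intro m n
    simp [orbitMap, f]
  have hinj : Function.Injective (orbitMap h) := by
    rintro ⟨m1, n1⟩ ⟨m2, n2⟩ heq
    rw [hform, hform, Prod.mk.injEq] at heq
    obtain ⟨h1, h2⟩ := heq
    have hn : (n1 : ℝ) = n2 := by
      rw [h2] at h1
      linarith
    have hnn : n1 = n2 := by exact_mod_cast hn
    have hm : (m1 : ℝ) = m2 := by
      rw [hn] at h2
      have : (m1 : ℝ) * h = m2 * h := by linarith
      exact mul_right_cancel₀ hne this
    have hmm : m1 = m2 := by exact_mod_cast hm
    simp [hmm, hnn]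
  -- properness: preimage of compact sets is finite
  have hcompact : ∀ ⦃K : Set (ℝ × ℝ)⦄, IsCompact K → IsCompact (orbitMap h ⁻¹' K) := by
    intro K hK
    obtain ⟨R, hR⟩ := hK.isBounded.subset_closedBall 0
    have hfin : (orbitMap h ⁻¹' K).Finite := by
      apply Set.Finite.subset
        ((intBall_finite ((R + (R + R ^ 2 / 2)) / |h|)).prod (intBall_finite (R + R ^ 2 / 2)))
      rintro ⟨m, n⟩ hmn
      have hball : orbitMap h (m, n) ∈ Metric.closedBall (0 : ℝ × ℝ) R := hR hmn
      rw [Metric.mem_closedBall, dist_zero_right] at hball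
      rw [hform] at hball
      have h1 : |((m : ℝ) * h + n) ^ 2 / 2 + n| ≤ R := by
        have := (norm_fst_le (((m : ℝ) * h + n) ^ 2 / 2 + n, (m : ℝ) * h + n)).trans hball
        rwa [Real.norm_eq_abs] at this
      have h2 : |(m : ℝ) * h + n| ≤ R := by
        have := (norm_snd_le (((m : ℝ) * h + n) ^ 2 / 2 + n, (m : ℝ) * h + n)).trans hball
        rwa [Real.norm_eq_abs] at this
      rw [abs_le] at h1 h2
      have hs2 : ((m : ℝ) * h + n) ^ 2 ≤ R ^ 2 := by
        have := sq_abs ((m : ℝ) * h + n)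
        nlinarith [abs_nonneg ((m : ℝ) * h + n), sq_abs ((m : ℝ) * h + n)]
      have hn : |(n : ℝ)| ≤ R + R ^ 2 / 2 := by
        rw [abs_le]
        constructor <;> nlinarith [sq_nonneg ((m : ℝ) * h + n)]
      have hmh : |(m : ℝ) * h| ≤ R + (R + R ^ 2 / 2) := by
        have : (m : ℝ) * h = ((m : ℝ) * h + n) - n := by ring
        rw [this]
        calc |((m : ℝ) * h + n) - n| ≤ |(m : ℝ) * h + n| + |(n : ℝ)| := abs_sub _ _
          _ ≤ R + (R + R ^ 2 / 2) :=
              add_le_add (abs_le.mpr h2) hn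
      have hm : |(m : ℝ)| ≤ (R + (R + R ^ 2 / 2)) / |h| := by
        rw [le_div_iff₀ (abs_pos.mpr hne)]
        rw [← abs_mul]
        exact hmh
      exact ⟨hm, hn⟩
    exact hfin.isCompact
  have hproper : IsProperMap (orbitMap h) :=
    isProperMap_iff_isCompact_preimage.mpr ⟨continuous_of_discreteTopology, hcompact⟩
  have hce : Topology.IsClosedEmbedding (orbitMap h) :=
    Topology.IsClosedEmbedding.of_continuous_injective_isClosedMap
      continuous_of_discreteTopology hinj hproper.isClosedMap
  refine ⟨hform, hinj, hce.isClosed_range, ?_⟩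
  exact (Topology.IsEmbedding.toHomeomorph hce.toIsEmbedding).symm.isEmbedding.discreteTopology
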